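/- Let G be a discrete group, I a nonempty set, T = I × G × I, and let (m_λ)_{λ∈Λ} be a bounded approximate diagonal for ℓ¹(G). For each finite nonempty subset F ⊆ I and λ ∈ Λ, set W_{F,λ} := (1/#F) Σ_{i,j∈F} E^{m_λ}_{(i,j,j,i)} ∈ ℓ¹(T × T). Then, with the index set Γ × Λ directed by inclusion of finite subsets of I in the first coordinate, for every a ∈ ℓ¹(T) one has π(W_{F,λ})a → a in norm, where π : ℓ¹(T × T) → ℓ¹(T) is the diagonal map. -/

import Mathlib

open Filter Topology
open scoped ENNReal TensorProduct Classical

noncomputable section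

/-- The Banach space `ℓ¹(X)` of absolutely summable complex functions on `X`. -/
abbrev l1 (X : Type*) : Type _ := lp (fun _ : X => ℂ) 1

section Defs

variable {I G : Type*} [Group G]

/-- The multiplication of the Brandt semigroup `S = B(I,G) = (I × G × I) ∪ {o}`,
where the zero element `o` is encoded as `none`. -/
def brandtMul : Option (I × G × I) → Option (I × G × I) → Option (I × G × I)
  | some (i, g, j), some (i', g', j') => if j = i' then some (i, g * g', j') else none
  | _, _ => none

/-- Spec: `mul` is the convolution product on `ℓ¹(T)`, `T = I × G × I`:
`(ab)(i,g,j) = Σ_{k ∈ I, h ∈ G} a(i, g h⁻¹, k) b(k, h, j)`. -/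
def IsConvT (mul : l1 (I × G × I) → l1 (I × G × I) → l1 (I × G × I)) : Prop :=
  ∀ (a b : l1 (I × G × I)) (i : I) (g : G) (j : I),
    mul a b (i, g, j) = ∑' p : I × G, a (i, g * p.2⁻¹, p.1) * b (p.1, p.2, j)

/-- Spec: `mul` is the convolution product on the group algebra `ℓ¹(G)`. -/
def IsConvG (mul : l1 G → l1 G → l1 G) : Prop :=
  ∀ (a b : l1 G) (g : G), mul a b g = ∑' h : G, a (g * h⁻¹) * b h

/-- Spec: `act` is the left module action of `ℓ¹(T)` on `ℓ¹(T × T) = ℓ¹(T) ⊗̂ ℓ¹(T)`,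
determined by `a·(x ⊗ y) = (ax) ⊗ y`. -/
def IsLeftActT
    (act : l1 (I × G × I) → l1 ((I × G × I) × (I × G × I)) → l1 ((I × G × I) × (I × G × I))) :
    Prop :=
  ∀ (a : l1 (I × G × I)) (w : l1 ((I × G × I) × (I × G × I))) (i : I) (g : G) (j : I)
    (t' : I × G × I),
    act a w ((i, g, j), t') = ∑' p : I × G, a (i, g * p.2⁻¹, p.1) * w ((p.1, p.2, j), t')

/-- Spec: `act` is the right module action of `ℓ¹(T)` on `ℓ¹(T × T) = ℓ¹(T) ⊗̂ ℓ¹(T)`,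
determined by `(x ⊗ y)·a = x ⊗ (ya)`. -/
def IsRightActT
    (act : l1 ((I × G × I) × (I × G × I)) → l1 (I × G × I) → l1 ((I × G × I) × (I × G × I))) :
    Prop :=
  ∀ (w : l1 ((I × G × I) × (I × G × I))) (a : l1 (I × G × I)) (t : I × G × I) (i : I) (g : G)
    (j : I),
    act w a (t, (i, g, j)) = ∑' p : I × G, w (t, (i, g * p.2⁻¹, p.1)) * a (p.1, p.2, j)

/-- Spec: `d` is the diagonal map `π : ℓ¹(T × T) = ℓ¹(T) ⊗̂ ℓ¹(T) → ℓ¹(T)`,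
determined by `δ_x ⊗ δ_y ↦ δ_x δ_y`. -/
def IsDiagT (d : l1 ((I × G × I) × (I × G × I)) → l1 (I × G × I)) : Prop :=
  ∀ (w : l1 ((I × G × I) × (I × G × I))) (i : I) (g : G) (j : I),
    d w (i, g, j) = ∑' p : I × G, w ((i, g * p.2⁻¹, p.1), (p.1, p.2, j))

/-- Spec: `act` is the left module action of `ℓ¹(G)` on `ℓ¹(G × G) = ℓ¹(G) ⊗̂ ℓ¹(G)`. -/
def IsLeftActG (act : l1 G → l1 (G × G) → l1 (G × G)) : Prop :=
  ∀ (a : l1 G) (w : l1 (G × G)) (g g' : G),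
    act a w (g, g') = ∑' h : G, a (g * h⁻¹) * w (h, g')

/-- Spec: `act` is the right module action of `ℓ¹(G)` on `ℓ¹(G × G) = ℓ¹(G) ⊗̂ ℓ¹(G)`. -/
def IsRightActG (act : l1 (G × G) → l1 G → l1 (G × G)) : Prop :=
  ∀ (w : l1 (G × G)) (a : l1 G) (g g' : G),
    act w a (g, g') = ∑' h : G, w (g, g' * h⁻¹) * a h

/-- Spec: `d` is the diagonal map `π : ℓ¹(G × G) = ℓ¹(G) ⊗̂ ℓ¹(G) → ℓ¹(G)`. -/
def IsDiagG (d : l1 (G × G) → l1 G) : Prop :=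
  ∀ (w : l1 (G × G)) (g : G), d w g = ∑' h : G, w (g * h⁻¹, h)

/-- Spec: `mul` is the convolution product on the semigroup algebra `ℓ¹(S)`, `S = B(I,G)`:
`(ab)(s) = Σ_{u v = s} a(u) b(v)`. -/
def IsConvS (mul : l1 (Option (I × G × I)) → l1 (Option (I × G × I)) →
    l1 (Option (I × G × I))) : Prop :=
  ∀ (a b : l1 (Option (I × G × I))) (s : Option (I × G × I)),
    mul a b s =
      ∑' p : {p : Option (I × G × I) × Option (I × G × I) // brandtMul p.1 p.2 = s},
        a p.val.1 * b p.val.2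

/-- Spec: left module action of `ℓ¹(S)` on `ℓ¹(S × S) = ℓ¹(S) ⊗̂ ℓ¹(S)`. -/
def IsLeftActS (act : l1 (Option (I × G × I)) →
    l1 (Option (I × G × I) × Option (I × G × I)) →
    l1 (Option (I × G × I) × Option (I × G × I))) : Prop :=
  ∀ (a : l1 (Option (I × G × I))) (w : l1 (Option (I × G × I) × Option (I × G × I)))
    (s s' : Option (I × G × I)),
    act a w (s, s') =
      ∑' p : {p : Option (I × G × I) × Option (I × G × I) // brandtMul p.1 p.2 = s},
        a p.val.1 * w (p.val.2, s')

/-- Spec: right module action of `ℓ¹(S)` on `ℓ¹(S × S) = ℓ¹(S) ⊗̂ ℓ¹(S)`. -/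
def IsRightActS (act : l1 (Option (I × G × I) × Option (I × G × I)) →
    l1 (Option (I × G × I)) →
    l1 (Option (I × G × I) × Option (I × G × I))) : Prop :=
  ∀ (w : l1 (Option (I × G × I) × Option (I × G × I))) (a : l1 (Option (I × G × I)))
    (s s' : Option (I × G × I)),
    act w a (s, s') =
      ∑' p : {p : Option (I × G × I) × Option (I × G × I) // brandtMul p.1 p.2 = s'},
        w (s, p.val.1) * a p.val.2

/-- Spec: the diagonal map `π : ℓ¹(S × S) = ℓ¹(S) ⊗̂ ℓ¹(S) → ℓ¹(S)`. -/
def IsDiagS (d : l1 (Option (I × G × I) × Option (I × G × I)) → l1 (Option (I × G × I))) :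
    Prop :=
  ∀ (w : l1 (Option (I × G × I) × Option (I × G × I))) (s : Option (I × G × I)),
    d w s =
      ∑' p : {p : Option (I × G × I) × Option (I × G × I) // brandtMul p.1 p.2 = s},
        w p.val

/-- Spec: `E` sends `b ∈ ℓ¹(G × G)` and `i,j,i',j' ∈ I` to the element
`E^b_{(i,j,i',j')} ∈ ℓ¹(T × T)`. -/
def IsE (E : l1 (G × G) → I → I → I → I → l1 ((I × G × I) × (I × G × I))) : Prop :=
  ∀ (b : l1 (G × G)) (i j i' j' : I),
    (∀ g g' : G, E b i j i' j' ((i, g, j), (i', g', j')) = b (g, g')) ∧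
    (∀ (u v u' v' : I) (g g' : G), (u, v, u', v') ≠ (i, j, i', j') →
      E b i j i' j' ((u, g, v), (u', g', v')) = 0)

/-- Spec: `H` sends `c ∈ ℓ¹(G)` and `i,j ∈ I` to the element `H^c_{(i,j)} ∈ ℓ¹(T)`. -/
def IsH (H : l1 G → I → I → l1 (I × G × I)) : Prop :=
  ∀ (c : l1 G) (i j : I),
    (∀ g : G, H c i j (i, g, j) = c g) ∧
    (∀ (u v : I) (g : G), (u, v) ≠ (i, j) → H c i j (u, g, v) = 0)

/-- Spec: `comp` sends `a ∈ ℓ¹(T)` and `u,v ∈ I` to `a_{(u,v)} ∈ ℓ¹(G)`,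
`a_{(u,v)}(g) = a(u,g,v)`. -/
def IsComp (comp : l1 (I × G × I) → I → I → l1 G) : Prop :=
  ∀ (a : l1 (I × G × I)) (u v : I) (g : G), comp a u v g = a (u, g, v)

/-- The net `W_{F,λ} = (1/#F) Σ_{i,j ∈ F} E^{m_λ}_{(i,j,j,i)}` in `ℓ¹(T × T)`. -/
def Wnet (E : l1 (G × G) → I → I → I → I → l1 ((I × G × I) × (I × G × I)))
    {Λ : Type*} (m : Λ → l1 (G × G)) (F : Finset I) (l : Λ) :
    l1 ((I × G × I) × (I × G × I)) :=
  (F.card : ℂ)⁻¹ • ∑ i ∈ F, ∑ j ∈ F, E (m l) i j j i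

/-- `(m_λ)` is a bounded approximate diagonal for `ℓ¹(G)` (with respect to the given
realizations of the product, the module actions on `ℓ¹(G) ⊗̂ ℓ¹(G) = ℓ¹(G × G)` and
the diagonal map). -/
def IsBddApproxDiagG {Λ : Type*} [Preorder Λ]
    (mulG : l1 G → l1 G → l1 G) (actLG : l1 G → l1 (G × G) → l1 (G × G))
    (actRG : l1 (G × G) → l1 G → l1 (G × G)) (piG : l1 (G × G) → l1 G)
    (m : Λ → l1 (G × G)) : Prop :=
  (∃ M : ℝ, ∀ l, ‖m l‖ ≤ M) ∧
  ∀ c : l1 G,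
    Tendsto (fun l => actLG c (m l) - actRG (m l) c) atTop (𝓝 0) ∧
    Tendsto (fun l => mulG (piG (m l)) c) atTop (𝓝 c)

end Defs

/-- Pseudo-amenability of an `ℓ¹`-type Banach algebra `A = ℓ¹(X)`, whose projective tensor
square `A ⊗̂ A` is realized concretely as `M = ℓ¹(X × X)`: there is a net (equivalently, a
nontrivial filtered family) `w` in `M` such that `a·w_n − w_n·a → 0` and `π(w_n)a → a` for
every `a ∈ A`. -/
def HasApproxDiag {A M : Type*} [NormedAddCommGroup A] [NormedAddCommGroup M]
    (mul : A → A → A) (actL : A → M → M) (actR : M → A → M) (diag : M → A) : Prop :=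
  ∃ (ι : Type*) (F : Filter ι), F.NeBot ∧ ∃ w : ι → M,
    ∀ a : A,
      Tendsto (fun n => actL a (w n) - actR (w n) a) F (𝓝 0) ∧
      Tendsto (fun n => mul (diag (w n)) a) F (𝓝 a)

/-- A discrete group `G` is amenable: there is a left-invariant mean on `ℓ∞(G)`,
i.e. a positive normalized left translation invariant linear functional. -/
def AmenableGroup (G : Type*) [Group G] : Prop :=
  ∃ m : lp (fun _ : G => ℝ) ∞ →ₗ[ℝ] ℝ,
    (∀ f : lp (fun _ : G => ℝ) ∞, (∀ x, 0 ≤ f x) → 0 ≤ m f) ∧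
    (∀ f : lp (fun _ : G => ℝ) ∞, (∀ x, f x = 1) → m f = 1) ∧
    (∀ (g : G) (f f' : lp (fun _ : G => ℝ) ∞), (∀ x, f' x = f (g * x)) → m f' = m f)

/-- The projective tensor seminorm on the algebraic tensor product `A ⊗[ℂ] A`:
the infimum of `Σ ‖x_k‖ ‖y_k‖` over all finite representations `Σ x_k ⊗ y_k`. -/
def projSeminorm (A : Type*) [NormedAddCommGroup A] [NormedSpace ℂ A] (x : A ⊗[ℂ] A) : ℝ :=
  sInf {r : ℝ | ∃ (n : ℕ) (f : Fin n → A × A),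
    x = ∑ k, (f k).1 ⊗ₜ[ℂ] (f k).2 ∧ r = ∑ k, ‖(f k).1‖ * ‖(f k).2‖}

/-- A Banach algebra `A` is pseudo-amenable: there is a net (equivalently, a nontrivial
filtered family) `(w_n)` in `A ⊗̂ A` with `a·w_n − w_n·a → 0` and `π(w_n)a → a` for every
`a ∈ A`, where `π` is the diagonal map and `A ⊗̂ A` carries the projective tensor seminorm. -/
def PseudoAmenable (A : Type*) [NonUnitalNormedRing A] [NormedSpace ℂ A]
    [SMulCommClass ℂ A A] [IsScalarTower ℂ A A] : Prop :=
  ∃ (ι : Type*) (F : Filter ι), F.NeBot ∧ ∃ w : ι → A ⊗[ℂ] A,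
    ∀ a : A,
      Tendsto (fun n => projSeminorm A
        (TensorProduct.map (LinearMap.mulLeft ℂ a) LinearMap.id (w n) -
          TensorProduct.map LinearMap.id (LinearMap.mulRight ℂ a) (w n))) F (𝓝 0) ∧
      Tendsto (fun n => LinearMap.mul' ℂ A (w n) * a) F (𝓝 a)



namespace AuxL1
variable {X : Type*}

lemma l1_summable (f : l1 X) : Summable fun x => ‖f x‖ := by
  have h := lp.memℓp f
  rw [memℓp_gen_iff (by norm_num : (0:ℝ) < (1:ℝ≥0∞).toReal)] at h
  simpa using h

lemma l1_norm (f : l1 X) : ‖f‖ = ∑' x, ‖f x‖ := by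
  rw [lp.norm_eq_tsum_rpow (by norm_num) f]; simp

lemma mem_l1 {f : X → ℂ} (hf : Summable fun x => ‖f x‖) : Memℓp f 1 :=
  memℓp_gen (by simpa using hf)

lemma lp_sum_apply {ι : Type*} (s : Finset ι) (f : ι → l1 X) (x : X) :
    (∑ i ∈ s, f i) x = ∑ i ∈ s, f i x := by
  classical
  induction s using Finset.induction_on with
  | empty => simp [lp.coeFn_zero]
  | insert _ _ h ih =>
      rw [Finset.sum_insert h, Finset.sum_insert h, lp.coeFn_add, Pi.add_apply, ih]

variable {I G : Type*} [Group G]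

def eT (I G : Type*) : (I × I) × G ≃ I × G × I where
  toFun p := (p.1.1, p.2, p.1.2)
  invFun t := ((t.1, t.2.2), t.2.1)
  left_inv _ := rfl
  right_inv _ := rfl

def compA (a : l1 (I × G × I)) (u v : I) : l1 G :=
  ⟨fun g => a (u, g, v), mem_l1 (Summable.comp_injective (l1_summable a)
    (i := fun g : G => ((u, g, v) : I × G × I)) (fun g g' h => by
      simpa using congrArg (fun t : I × G × I => t.2.1) h))⟩

@[simp] lemma compA_apply (a : l1 (I × G × I)) (u v : I) (g : G) :
    compA a u v g = a (u, g, v) := rfl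

lemma summable_eT (x : l1 (I × G × I)) :
    Summable fun p : (I × I) × G => ‖x (p.1.1, p.2, p.1.2)‖ :=
  ((eT I G).summable_iff (f := fun t => ‖x t‖)).2 (l1_summable x)

lemma l1_norm_decomp (x : l1 (I × G × I)) :
    ‖x‖ = ∑' uv : I × I, ∑' g : G, ‖x (uv.1, g, uv.2)‖ := by
  rw [l1_norm, ← (eT I G).tsum_eq (fun t => ‖x t‖)]
  exact Summable.tsum_prod (summable_eT x)

lemma summable_marginal (x : l1 (I × G × I)) :
    Summable fun uv : I × I => ∑' g : G, ‖x (uv.1, g, uv.2)‖ :=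
  ((summable_prod_of_nonneg (fun _ => norm_nonneg _)).1 (summable_eT x)).2

/-- the `ℓ¹(T)` element supported on `{(u,g,u) : u ∈ F}` with value `c g`. -/
def Pel (F : Finset I) (c : l1 G) : l1 (I × G × I) :=
  ⟨fun t => if t.1 = t.2.2 ∧ t.1 ∈ F then c t.2.1 else 0, by
    apply mem_l1
    have hinj : Function.Injective (fun p : ↥F × G => ((p.1.1, p.2, p.1.1) : I × G × I)) := by
      rintro ⟨⟨u, hu⟩, g⟩ ⟨⟨u', hu'⟩, g'⟩ h
      have h1 := congrArg (fun t : I × G × I => t.1) h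
      have h2 := congrArg (fun t : I × G × I => t.2.1) h
      simp only at h1 h2
      subst h1; subst h2; rfl
    apply (Function.Injective.summable_iff hinj ?_).1
    · have : Summable fun p : ↥F × G => ‖c p.2‖ := by
        apply (summable_prod_of_nonneg (fun _ => norm_nonneg _)).2
        exact ⟨fun _ => l1_summable c, Summable.of_finite⟩
      refine this.congr fun p => ?_
      simp [p.1.2]
    · rintro ⟨u, g, v⟩ ht
      by_cases hc : u = v ∧ u ∈ F
      · exact absurd ⟨(⟨u, hc.2⟩, g), by simp [← hc.1]⟩ ht
      · simp [hc]⟩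

@[simp] lemma Pel_apply (F : Finset I) (c : l1 G) (u : I) (g : G) (v : I) :
    Pel F c (u, g, v) = if u = v ∧ u ∈ F then c g else 0 := rfl

lemma E_eval {E : l1 (G × G) → I → I → I → I → l1 ((I × G × I) × (I × G × I))}
    (hE : IsE E) (b : l1 (G × G)) (i j u v p1 : I) (h p2 : G) :
    E b i j j i ((u, h, p1), (p1, p2, v)) =
      if u = i ∧ v = i ∧ p1 = j then b (h, p2) else 0 := by
  by_cases hc : u = i ∧ v = i ∧ p1 = j
  · obtain ⟨h1, h2, h3⟩ := hc
    rw [if_pos ⟨h1, h2, h3⟩, h1, h2, h3]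
    exact (hE b i j j i).1 h p2
  · rw [if_neg hc]
    refine (hE b i j j i).2 u p1 p1 v h p2 fun hq => hc ?_
    simp only [Prod.mk.injEq] at hq
    exact ⟨hq.1, hq.2.2.2, hq.2.1⟩

lemma summable_shear_norm (w : l1 (G × G)) (g : G) :
    Summable fun h : G => ‖w (g * h⁻¹, h)‖ :=
  Summable.comp_injective (l1_summable w)
    (i := fun h : G => ((g * h⁻¹, h) : G × G)) (fun h h' e => by
      simpa using congrArg (fun t : G × G => t.2) e)

lemma tsum_ind (F : Finset I) (f : G → ℂ) (hf : Summable fun h => ‖f h‖) :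
    ∑' p : I × G, (if p.1 ∈ F then f p.2 else 0) = (F.card : ℂ) * ∑' h, f h := by
  have hsum : Summable fun p : I × G => (if p.1 ∈ F then f p.2 else 0) := by
    apply Summable.of_norm
    apply (summable_prod_of_nonneg (fun _ => norm_nonneg _)).2
    constructor
    · intro u
      by_cases hu : u ∈ F
      · simpa [hu] using hf
      · simpa [hu] using summable_zero
    · apply summable_of_ne_finset_zero (s := F)
      intro u hu
      simp [hu]
  rw [Summable.tsum_prod hsum]
  have hinner : ∀ u : I, ∑' g : G, (if u ∈ F then f g else 0)
      = if u ∈ F then ∑' g, f g else 0 := by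
    intro u; by_cases hu : u ∈ F <;> simp [hu]
  rw [tsum_congr hinner, tsum_eq_sum (s := F) (fun u hu => by simp [hu])]
  simp [Finset.sum_const, nsmul_eq_mul]

lemma piT_Wnet {Λ : Type*}
    {piT : l1 ((I × G × I) × (I × G × I)) → l1 (I × G × I)} (hpiT : IsDiagT piT)
    {E : l1 (G × G) → I → I → I → I → l1 ((I × G × I) × (I × G × I))} (hE : IsE E)
    {piG : l1 (G × G) → l1 G} (hpiG : IsDiagG piG)
    (m : Λ → l1 (G × G)) (F : Finset I) (hF : F.Nonempty) (l : Λ) :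
    piT (Wnet E m F l) = Pel F (piG (m l)) := by
  apply lp.ext
  funext t
  obtain ⟨u, g, v⟩ := t
  rw [hpiT (Wnet E m F l) u g v]
  have hW : ∀ p : I × G, Wnet E m F l ((u, g * p.2⁻¹, p.1), (p.1, p.2, v))
      = (F.card : ℂ)⁻¹ * (if u = v ∧ u ∈ F then
          (if p.1 ∈ F then (m l) (g * p.2⁻¹, p.2) else 0) else 0) := by
    intro p
    show ((F.card : ℂ)⁻¹ • (∑ i ∈ F, ∑ j ∈ F, E (m l) i j j i) :
        l1 ((I × G × I) × (I × G × I))) _ = _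
    rw [lp.coeFn_smul]
    simp only [Pi.smul_apply, smul_eq_mul]
    congr 1
    rw [lp_sum_apply]
    have hterm : ∀ i ∈ F, (∑ j ∈ F, E (m l) i j j i) ((u, g * p.2⁻¹, p.1), (p.1, p.2, v))
        = ∑ j ∈ F, (if u = i ∧ v = i ∧ p.1 = j then (m l) (g * p.2⁻¹, p.2) else 0) := by
      intro i _
      rw [lp_sum_apply]
      exact Finset.sum_congr rfl fun j _ => E_eval hE (m l) i j u v p.1 (g * p.2⁻¹) p.2
    rw [Finset.sum_congr rfl hterm]
    by_cases hc : u = v ∧ u ∈ F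
    · rw [if_pos hc]
      obtain ⟨huv, huF⟩ := hc
      subst huv
      rw [Finset.sum_eq_single_of_mem u huF (fun i hi hne => Finset.sum_eq_zero fun j _ =>
        if_neg (by rintro ⟨hq1, -, -⟩; exact hne hq1.symm))]
      simp
    · rw [if_neg hc]
      apply Finset.sum_eq_zero; intro i hi
      apply Finset.sum_eq_zero; intro j _
      exact if_neg (by rintro ⟨hq1, hq2, -⟩; exact hc ⟨hq1.trans hq2.symm, hq1 ▸ hi⟩)
  rw [tsum_congr hW, tsum_mul_left]
  by_cases hc : u = v ∧ u ∈ F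
  · simp only [if_pos hc]
    rw [tsum_ind F (fun h => m l (g * h⁻¹, h)) (summable_shear_norm (m l) g),
      Pel_apply, if_pos hc, hpiG, inv_mul_cancel_left₀]
    exact Nat.cast_ne_zero.mpr hF.card_pos.ne'
  · simp only [if_neg hc, Pel_apply]
    simp

def eG (G : Type*) [Group G] : G × G ≃ G × G where
  toFun p := (p.1 * p.2, p.2)
  invFun p := (p.1 * p.2⁻¹, p.2)
  left_inv p := by simp
  right_inv p := by simp

@[simp] lemma eG_symm_apply (p : G × G) : (eG G).symm p = (p.1 * p.2⁻¹, p.2) := rfl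

set_option maxHeartbeats 800000 in
lemma summable_shear (w : l1 (G × G)) :
    Summable fun p : G × G => ‖w (p.1 * p.2⁻¹, p.2)‖ := by
  have h := ((eG G).symm.summable_iff (f := fun p : G × G => ‖w p‖)).2 (l1_summable w)
  simpa [Function.comp_def] using h

set_option maxHeartbeats 800000 in
lemma norm_piG_le {piG : l1 (G × G) → l1 G} (hpiG : IsDiagG piG)
    (w : l1 (G × G)) : ‖piG w‖ ≤ ‖w‖ := by
  have hsum := summable_shear w
  have hfib : ∀ g : G, Summable fun h : G => ‖w (g * h⁻¹, h)‖ := fun g =>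
    hsum.prod_factor g
  have hmarg : Summable fun g : G => ∑' h : G, ‖w (g * h⁻¹, h)‖ :=
    ((summable_prod_of_nonneg (fun _ => norm_nonneg _)).1 hsum).2
  rw [l1_norm]
  calc ∑' g : G, ‖piG w g‖ ≤ ∑' g : G, ∑' h : G, ‖w (g * h⁻¹, h)‖ := by
        refine Summable.tsum_le_tsum (fun g => ?_) (l1_summable _) hmarg
        rw [hpiG]
        exact norm_tsum_le_tsum_norm (hfib g)
    _ = ∑' p : G × G, ‖w (p.1 * p.2⁻¹, p.2)‖ := (Summable.tsum_prod hsum).symm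
    _ = ∑' p : G × G, ‖w p‖ := by
        have h := (eG G).symm.tsum_eq (f := fun p : G × G => ‖w p‖)
        simpa using h
    _ = ‖w‖ := (l1_norm w).symm

set_option maxHeartbeats 1600000 in
lemma norm_mulG_le {mulG : l1 G → l1 G → l1 G} (hmulG : IsConvG mulG)
    (c b : l1 G) : ‖mulG c b‖ ≤ ‖c‖ * ‖b‖ := by
  have hprod : Summable fun p : G × G => ‖c p.1‖ * ‖b p.2‖ :=
    (l1_summable c).mul_of_nonneg (l1_summable b) (fun _ => norm_nonneg _)
      (fun _ => norm_nonneg _)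
  have hbase : Summable fun p : G × G => ‖c (p.1 * p.2⁻¹)‖ * ‖b p.2‖ := by
    have h := ((eG G).symm.summable_iff
      (f := fun p : G × G => ‖c p.1‖ * ‖b p.2‖)).2 hprod
    simpa [Function.comp_def] using h
  have hfib : ∀ g : G, Summable fun h : G => ‖c (g * h⁻¹)‖ * ‖b h‖ := fun g =>
    hbase.prod_factor g
  have hmarg : Summable fun g : G => ∑' h : G, ‖c (g * h⁻¹)‖ * ‖b h‖ :=
    ((summable_prod_of_nonneg (fun _ => mul_nonneg (norm_nonneg _) (norm_nonneg _))).1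
      hbase).2
  rw [l1_norm]
  calc ∑' g : G, ‖mulG c b g‖ ≤ ∑' g : G, ∑' h : G, ‖c (g * h⁻¹)‖ * ‖b h‖ := by
        refine Summable.tsum_le_tsum (fun g => ?_) (l1_summable _) hmarg
        rw [hmulG]
        have h := norm_tsum_le_tsum_norm (f := fun h : G => c (g * h⁻¹) * b h)
          (by simpa [norm_mul] using hfib g)
        simpa [norm_mul] using h
    _ = ∑' p : G × G, ‖c (p.1 * p.2⁻¹)‖ * ‖b p.2‖ := (Summable.tsum_prod hbase).symm
    _ = ∑' p : G × G, ‖c p.1‖ * ‖b p.2‖ := by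
        have h := (eG G).symm.tsum_eq (f := fun p : G × G => ‖c p.1‖ * ‖b p.2‖)
        simpa using h
    _ = ‖c‖ * ‖b‖ := by
        rw [Summable.tsum_prod hprod, l1_norm, l1_norm]
        simp_rw [Summable.tsum_mul_left _ (l1_summable b)]
        exact Summable.tsum_mul_right _ (l1_summable c)

lemma norm_compA (a : l1 (I × G × I)) (u v : I) :
    ‖compA a u v‖ = ∑' g : G, ‖a (u, g, v)‖ := l1_norm _

lemma summable_norm_compA (a : l1 (I × G × I)) :
    Summable fun uv : I × I => ‖compA a uv.1 uv.2‖ := by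
  simpa only [norm_compA] using summable_marginal a

lemma tsum_norm_compA (a : l1 (I × G × I)) :
    ∑' uv : I × I, ‖compA a uv.1 uv.2‖ = ‖a‖ := by
  simp only [norm_compA]
  exact (l1_norm_decomp a).symm

lemma mulT_Pel {mulT : l1 (I × G × I) → l1 (I × G × I) → l1 (I × G × I)}
    (hmulT : IsConvT mulT) {mulG : l1 G → l1 G → l1 G} (hmulG : IsConvG mulG)
    (F : Finset I) (c : l1 G) (a : l1 (I × G × I)) (u : I) (g : G) (v : I) :
    mulT (Pel F c) a (u, g, v) = if u ∈ F then mulG c (compA a u v) g else 0 := by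
  rw [hmulT]
  by_cases hu : u ∈ F
  · rw [if_pos hu, hmulG]
    have hinj : Function.Injective (fun h : G => ((u, h) : I × G)) := fun h h' e => by
      simpa using congrArg Prod.snd e
    rw [← Function.Injective.tsum_eq hinj
      (f := fun p : I × G => Pel F c (u, g * p.2⁻¹, p.1) * a (p.1, p.2, v)) ?_]
    · apply tsum_congr; intro h
      simp [hu]
    · rintro ⟨p1, p2⟩ hp
      simp only [Function.mem_support, Ne, Set.mem_range] at hp ⊢
      by_cases h1 : u = p1
      · exact ⟨p2, by rw [h1]⟩
      · exact absurd (by simp [Pel_apply, h1]) hp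
  · rw [if_neg hu]
    have hzero : ∀ p : I × G, Pel F c (u, g * p.2⁻¹, p.1) * a (p.1, p.2, v) = 0 := by
      intro p
      have : Pel F c (u, g * p.2⁻¹, p.1) = 0 := by
        rw [Pel_apply, if_neg (by rintro ⟨-, h2⟩; exact hu h2)]
      rw [this, zero_mul]
    rw [tsum_congr hzero, tsum_zero]

/-- the `(u,v)` component of `mulT (Pel F c) a - a`. -/
def Dl (mulG : l1 G → l1 G → l1 G) (F : Finset I) (c : l1 G) (a : l1 (I × G × I))
    (u v : I) : l1 G :=
  (if u ∈ F then mulG c (compA a u v) else 0) - compA a u v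

lemma Dl_apply (mulG : l1 G → l1 G → l1 G) (F : Finset I) (c : l1 G)
    (a : l1 (I × G × I)) (u v : I) (g : G) :
    Dl mulG F c a u v g = (if u ∈ F then mulG c (compA a u v) g else 0) - a (u, g, v) := by
  unfold Dl
  rw [lp.coeFn_sub, Pi.sub_apply, apply_ite (fun y : l1 G => (y : G → ℂ) g)]
  simp

lemma x_apply {mulT : l1 (I × G × I) → l1 (I × G × I) → l1 (I × G × I)}
    (hmulT : IsConvT mulT) {mulG : l1 G → l1 G → l1 G} (hmulG : IsConvG mulG)
    (F : Finset I) (c : l1 G) (a : l1 (I × G × I)) (u : I) (g : G) (v : I) :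
    (mulT (Pel F c) a - a) (u, g, v) = Dl mulG F c a u v g := by
  rw [lp.coeFn_sub, Pi.sub_apply, mulT_Pel hmulT hmulG, Dl_apply]

lemma key_norm {mulT : l1 (I × G × I) → l1 (I × G × I) → l1 (I × G × I)}
    (hmulT : IsConvT mulT) {mulG : l1 G → l1 G → l1 G} (hmulG : IsConvG mulG)
    (F : Finset I) (c : l1 G) (a : l1 (I × G × I)) :
    ‖mulT (Pel F c) a - a‖ = ∑' uv : I × I, ‖Dl mulG F c a uv.1 uv.2‖ := by
  rw [l1_norm_decomp (mulT (Pel F c) a - a)]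
  apply tsum_congr; intro uv
  rw [l1_norm (Dl mulG F c a uv.1 uv.2)]
  exact tsum_congr fun g => by rw [x_apply hmulT hmulG]

lemma summable_Dl {mulT : l1 (I × G × I) → l1 (I × G × I) → l1 (I × G × I)}
    (hmulT : IsConvT mulT) {mulG : l1 G → l1 G → l1 G} (hmulG : IsConvG mulG)
    (F : Finset I) (c : l1 G) (a : l1 (I × G × I)) :
    Summable fun uv : I × I => ‖Dl mulG F c a uv.1 uv.2‖ := by
  apply (summable_marginal (mulT (Pel F c) a - a)).congr
  intro uv
  rw [l1_norm (Dl mulG F c a uv.1 uv.2)]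
  exact tsum_congr fun g => by rw [x_apply hmulT hmulG]

lemma Dl_norm_le {mulG : l1 G → l1 G → l1 G} (hmulG : IsConvG mulG)
    (F : Finset I) (c : l1 G) (a : l1 (I × G × I)) (u v : I) :
    ‖Dl mulG F c a u v‖ ≤ (‖c‖ + 1) * ‖compA a u v‖ := by
  unfold Dl
  by_cases hu : u ∈ F
  · rw [if_pos hu]
    calc ‖mulG c (compA a u v) - compA a u v‖
        ≤ ‖mulG c (compA a u v)‖ + ‖compA a u v‖ := norm_sub_le _ _
      _ ≤ ‖c‖ * ‖compA a u v‖ + ‖compA a u v‖ := by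
          have := norm_mulG_le hmulG c (compA a u v)
          linarith
      _ = (‖c‖ + 1) * ‖compA a u v‖ := by ring
  · rw [if_neg hu, zero_sub, norm_neg]
    nlinarith [norm_nonneg c, norm_nonneg (compA a u v)]

end AuxL1

open AuxL1 in
set_option maxHeartbeats 4000000 in
theorem diag_W_mul_tendsto {G : Type*} [Group G] {I : Type*} [Nonempty I]
    {Λ : Type*} [Preorder Λ] [IsDirected Λ (· ≤ ·)] [Nonempty Λ]
    (mulG : l1 G → l1 G → l1 G) (hmulG : IsConvG mulG)
    (actLG : l1 G → l1 (G × G) → l1 (G × G)) (hactLG : IsLeftActG actLG)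
    (actRG : l1 (G × G) → l1 G → l1 (G × G)) (hactRG : IsRightActG actRG)
    (piG : l1 (G × G) → l1 G) (hpiG : IsDiagG piG)
    (m : Λ → l1 (G × G)) (hm : IsBddApproxDiagG mulG actLG actRG piG m)
    (E : l1 (G × G) → I → I → I → I → l1 ((I × G × I) × (I × G × I))) (hE : IsE E)
    (mulT : l1 (I × G × I) → l1 (I × G × I) → l1 (I × G × I)) (hmulT : IsConvT mulT)
    (piT : l1 ((I × G × I) × (I × G × I)) → l1 (I × G × I)) (hpiT : IsDiagT piT)
    (a : l1 (I × G × I)) :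
    Filter.Tendsto
      (fun p : {F : Finset I // F.Nonempty} × Λ => mulT (piT (Wnet E m p.1.val p.2)) a)
      Filter.atTop (nhds a) := by

  classical
  haveI : Nonempty {F : Finset I // F.Nonempty} :=
    ⟨⟨{Classical.arbitrary I}, Finset.singleton_nonempty _⟩⟩
  haveI : IsDirected {F : Finset I // F.Nonempty} (· ≤ ·) := by
    constructor
    rintro ⟨A, hA⟩ ⟨B, hB⟩
    exact ⟨⟨A ∪ B, hA.mono Finset.subset_union_left⟩,
      Finset.subset_union_left, Finset.subset_union_right⟩
  haveI : IsDirected ({F : Finset I // F.Nonempty} × Λ) (· ≤ ·) := by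
    constructor
    rintro ⟨A, lA⟩ ⟨B, lB⟩
    obtain ⟨C, hC1, hC2⟩ := exists_ge_ge A B
    obtain ⟨lC, hl1, hl2⟩ := exists_ge_ge lA lB
    exact ⟨⟨C, lC⟩, ⟨hC1, hl1⟩, ⟨hC2, hl2⟩⟩
  obtain ⟨M, hM⟩ := hm.1
  set K : ℝ := max M 0 + 2 with hKdef
  have hKpos : 0 < K := by
    have := le_max_right M 0; simp only [hKdef]; linarith
  have hc_bound : ∀ l, ‖piG (m l)‖ + 1 ≤ K := by
    intro l
    have h1 := norm_piG_le hpiG (m l)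
    have h2 := hM l
    have h3 := le_max_left M 0
    simp only [hKdef]; linarith
  rw [Metric.tendsto_nhds]
  intro ε hε
  set δ : ℝ := ε / (2 * K) with hδdef
  have hδpos : 0 < δ := by positivity
  have hsumA := summable_norm_compA a
  -- choose the finite set S of components carrying most of the mass of a
  obtain ⟨S, hS⟩ : ∃ S : Finset (I × I),
      (∑' uv : ↑((S : Set (I × I))ᶜ), ‖compA a (uv : I × I).1 (uv : I × I).2‖) < δ := by
    have hha : HasSum (fun uv : I × I => ‖compA a uv.1 uv.2‖) ‖a‖ := by
      have := hsumA.hasSum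
      rwa [tsum_norm_compA] at this
    have h1 : ∀ᶠ s : Finset (I × I) in atTop,
        ‖a‖ - δ < ∑ uv ∈ s, ‖compA a uv.1 uv.2‖ :=
      hha.eventually (eventually_gt_nhds (by linarith))
    obtain ⟨S, hS'⟩ := h1.exists
    refine ⟨S, ?_⟩
    have h2 := Summable.sum_add_tsum_compl (s := S) hsumA
    rw [tsum_norm_compA] at h2
    have : (∑' uv : ↑((S : Set (I × I))ᶜ), ‖compA a (uv : I × I).1 (uv : I × I).2‖)
        = ‖a‖ - ∑ uv ∈ S, ‖compA a uv.1 uv.2‖ := by linarith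
    linarith
  set δ' : ℝ := ε / (2 * ((S.card : ℝ) + 1)) with hδ'def
  have hδ'pos : 0 < δ' := by positivity
  have hev : ∀ᶠ l : Λ in atTop, ∀ uv ∈ S,
      ‖mulG (piG (m l)) (compA a uv.1 uv.2) - compA a uv.1 uv.2‖ < δ' := by
    rw [Filter.eventually_all_finset]
    intro uv _
    have ht := Metric.tendsto_nhds.1 ((hm.2 (compA a uv.1 uv.2)).2) δ' hδ'pos
    simpa [dist_eq_norm] using ht
  obtain ⟨l₀, hl₀⟩ := eventually_atTop.1 hev
  set F₀ : Finset I := S.image Prod.fst ∪ {Classical.arbitrary I} with hF₀def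
  have hF₀ : F₀.Nonempty := ⟨Classical.arbitrary I, by simp [hF₀def]⟩
  rw [eventually_atTop]
  refine ⟨(⟨F₀, hF₀⟩, l₀), ?_⟩
  rintro ⟨⟨F, hF⟩, l⟩ hge
  have hge1 : F₀ ⊆ F := hge.1
  have hgel : l₀ ≤ l := hge.2
  set c := piG (m l) with hcdef
  rw [dist_eq_norm, piT_Wnet hpiT hE hpiG m F hF l, key_norm hmulT hmulG F c a]
  have hsumD := summable_Dl hmulT hmulG F c a
  rw [← Summable.sum_add_tsum_compl (s := S) hsumD]
  -- first part : the finitely many good components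
  have hmem : ∀ uv ∈ S, uv.1 ∈ F := by
    intro uv huv
    exact hge1 (Finset.mem_union_left _ (Finset.mem_image_of_mem Prod.fst huv))
  have term1 : (∑ uv ∈ S, ‖Dl mulG F c a uv.1 uv.2‖) ≤ (S.card : ℝ) * δ' := by
    have hle : ∀ uv ∈ S, ‖Dl mulG F c a uv.1 uv.2‖ ≤ δ' := by
      intro uv huv
      have : Dl mulG F c a uv.1 uv.2
          = mulG c (compA a uv.1 uv.2) - compA a uv.1 uv.2 := by
        unfold Dl; rw [if_pos (hmem uv huv)]
      rw [this]
      exact le_of_lt (hl₀ l hgel uv huv)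
    calc (∑ uv ∈ S, ‖Dl mulG F c a uv.1 uv.2‖) ≤ ∑ _uv ∈ S, δ' :=
          Finset.sum_le_sum hle
      _ = (S.card : ℝ) * δ' := by rw [Finset.sum_const, nsmul_eq_mul]
  have hcard : (S.card : ℝ) * δ' < ε / 2 := by
    have h1 : (0:ℝ) < (S.card : ℝ) + 1 := by positivity
    have heq : ((S.card : ℝ) + 1) * δ' = ε / 2 := by
      simp only [hδ'def]; field_simp
    nlinarith
  -- second part : the tail
  have term2 : (∑' uv : ↑((S : Set (I × I))ᶜ), ‖Dl mulG F c a (uv : I × I).1 (uv : I × I).2‖)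
      < ε / 2 := by
    have hb : ∀ uv : ↑((S : Set (I × I))ᶜ),
        ‖Dl mulG F c a (uv : I × I).1 (uv : I × I).2‖
          ≤ K * ‖compA a (uv : I × I).1 (uv : I × I).2‖ := by
      intro uv
      have h1 := Dl_norm_le hmulG F c a (uv : I × I).1 (uv : I × I).2
      have h2 := hc_bound l
      have h3 : (‖c‖ + 1) * ‖compA a (uv : I × I).1 (uv : I × I).2‖
          ≤ K * ‖compA a (uv : I × I).1 (uv : I × I).2‖ :=
        mul_le_mul_of_nonneg_right (by rw [hcdef]; exact h2) (norm_nonneg _)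
      linarith
    have hsc : Summable fun uv : ↑((S : Set (I × I))ᶜ) =>
        K * ‖compA a (uv : I × I).1 (uv : I × I).2‖ :=
      (hsumA.subtype _).mul_left K
    calc (∑' uv : ↑((S : Set (I × I))ᶜ), ‖Dl mulG F c a (uv : I × I).1 (uv : I × I).2‖)
        ≤ ∑' uv : ↑((S : Set (I × I))ᶜ), K * ‖compA a (uv : I × I).1 (uv : I × I).2‖ :=
          Summable.tsum_le_tsum hb (hsumD.subtype _) hsc
      _ = K * ∑' uv : ↑((S : Set (I × I))ᶜ), ‖compA a (uv : I × I).1 (uv : I × I).2‖ :=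
          tsum_mul_left
      _ < K * δ := by exact mul_lt_mul_of_pos_left hS hKpos
      _ = ε / 2 := by simp only [hδdef]; field_simp
  linarith

end
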